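/- Let S consist of 2n points given as n pairs {p_i, q_i} in a metric space, with n ≥ 3, and let μ > 0 and β ≥ 1. Suppose S = R_0 ∪ B_0 is a feasible coloring with d(R_0, B_0) > 0 and d(R_0, B_0) ≥ μ · (tspCost(R_0) + tspCost(B_0)), where d(R_0, B_0) = min{ d(x, y) : x ∈ R_0, y ∈ B_0 }. Let C be any Hamiltonian cycle on S whose total length is at most β · tspCost(S). Then the number of edges of C having one endpoint in R_0 and the other in B_0 is at most (2 + 1/μ) · β. -/

import Mathlib

variable {α : Type*} [MetricSpace α] [DecidableEq α]

/-- The total length of the closed tour visiting the points of `l` in order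
(each element of `l` is joined to its cyclic successor). -/
noncomputable def cycleWeight (l : List α) : ℝ :=
  ((l.zip (l.rotate 1)).map (fun e => dist e.1 e.2)).sum

/-- The minimum total length of a Hamiltonian cycle through the finite point set `X`. -/
noncomputable def tspCost (X : Finset α) : ℝ :=
  sInf {c | ∃ l : List α, l.Nodup ∧ l.toFinset = X ∧ c = cycleWeight l}

/-- The minimum point-wise distance between two finite sets. -/
noncomputable def setDist (X Y : Finset α) : ℝ :=
  sInf {c | ∃ x ∈ X, ∃ y ∈ Y, c = dist x y}

namespace CrossAux

noncomputable def pw (l : List α) : ℝ := ((l.zip l.tail).map (fun e => dist e.1 e.2)).sum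

lemma pw_nil : pw ([] : List α) = 0 := by simp [pw]

lemma pw_single (a : α) : pw [a] = 0 := by simp [pw]

lemma pw_cons_cons (a b : α) (t : List α) : pw (a :: b :: t) = dist a b + pw (b :: t) := by
  simp [pw]

lemma zipaux (t : List α) : ∀ a b : α,
    (((a :: t).zip (t ++ [b])).map (fun e => dist e.1 e.2)).sum
      = pw (a :: t) + dist (t.getLastD a) b := by
  induction t with
  | nil => intro a b; simp [pw]
  | cons c t' ih =>
    intro a b
    simp only [List.cons_append, List.zip_cons_cons, List.map_cons, List.sum_cons, ih c b,
      pw_cons_cons, List.getLastD_cons]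
    ring

lemma cw_cons (a : α) (t : List α) :
    cycleWeight (a :: t) = pw (a :: t) + dist (t.getLastD a) a := by
  have h : (a :: t).rotate 1 = t ++ [a] := by
    simpa using List.rotate_cons_succ t a 0
  rw [cycleWeight, h, zipaux]

lemma pw_cons_append (t : List α) : ∀ a b : α,
    pw ((a :: t) ++ [b]) = pw (a :: t) + dist (t.getLastD a) b := by
  induction t with
  | nil => intro a b; simp [pw]
  | cons c t' ih =>
    intro a b
    simp only [List.cons_append, pw_cons_cons, List.getLastD_cons]
    have h := ih c b
    rw [List.cons_append] at h
    rw [h]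
    ring

lemma pw_split (r : List α) : ∀ (x y : α) (b : List α),
    pw ((x :: r) ++ (y :: b)) = pw (x :: r) + dist (r.getLastD x) y + pw (y :: b) := by
  induction r with
  | nil =>
    intro x y b
    simp only [List.nil_append, List.getLastD_nil, pw_single]
    show pw (x :: y :: b) = _
    rw [pw_cons_cons]
    ring
  | cons c r' ih =>
    intro x y b
    simp only [List.cons_append, pw_cons_cons, List.getLastD_cons]
    have h := ih c y b
    rw [List.cons_append] at h
    rw [h]
    ring

lemma getLastD_append_cons (r : List α) : ∀ (x y : α) (b : List α),
    (r ++ y :: b).getLastD x = b.getLastD y := by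
  induction r with
  | nil => intro x y b; rw [List.nil_append, List.getLastD_cons]
  | cons c r' ih =>
    intro x y b
    rw [List.cons_append, List.getLastD_cons, ih]

lemma cw_rotate_one (l : List α) : cycleWeight (l.rotate 1) = cycleWeight l := by
  match l with
  | [] => simp
  | [a] => simp [List.rotate_singleton]
  | a :: c :: t' =>
    have h : (a :: c :: t').rotate 1 = c :: (t' ++ [a]) := by
      simpa using List.rotate_cons_succ (c :: t') a 0
    rw [h, cw_cons, cw_cons]
    have h2 : c :: (t' ++ [a]) = (c :: t') ++ [a] := rfl
    rw [show t' ++ [a] = t' ++ [a] from rfl]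
    rw [List.getLastD_concat, pw_cons_cons, List.getLastD_cons]
    have h3 : pw (c :: (t' ++ [a])) = pw (c :: t') + dist (t'.getLastD c) a := by
      rw [h2, pw_cons_append]
    rw [h3, dist_comm a c]
    ring

lemma cw_rotate (l : List α) : ∀ n : ℕ, cycleWeight (l.rotate n) = cycleWeight l := by
  intro n
  induction n generalizing l with
  | zero => simp
  | succ n ih =>
    have : l.rotate (n + 1) = (l.rotate 1).rotate n := by
      rw [List.rotate_rotate, Nat.add_comm]
    rw [this, ih, cw_rotate_one]

lemma cw_nonneg (l : List α) : 0 ≤ cycleWeight l :=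
  List.sum_nonneg (by rintro x hx; simp only [List.mem_map] at hx
                      obtain ⟨e, _, rfl⟩ := hx; exact dist_nonneg)

lemma cw_combine (x y : α) (r b : List α) :
    cycleWeight ((x :: r) ++ (y :: b))
      ≤ cycleWeight (x :: r) + cycleWeight (y :: b) + 2 * dist x y := by
  have h1 : (x :: r) ++ (y :: b) = x :: (r ++ y :: b) := rfl
  rw [h1, cw_cons, getLastD_append_cons, ← h1, pw_split, cw_cons, cw_cons]
  have t1 : dist (r.getLastD x) y ≤ dist (r.getLastD x) x + dist x y := dist_triangle _ _ _
  have t2 : dist (b.getLastD y) x ≤ dist (b.getLastD y) y + dist y x := dist_triangle _ _ _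
  have := dist_comm x y
  linarith

lemma tsp_bdd (X : Finset α) :
    BddBelow {c | ∃ l : List α, l.Nodup ∧ l.toFinset = X ∧ c = cycleWeight l} := by
  refine ⟨0, ?_⟩
  rintro c ⟨l', _, _, rfl⟩
  exact cw_nonneg l'

lemma tspCost_le (X : Finset α) (l : List α) (h1 : l.Nodup) (h2 : l.toFinset = X) :
    tspCost X ≤ cycleWeight l :=
  csInf_le (tsp_bdd X) ⟨l, h1, h2, rfl⟩

lemma tspCost_exists (X : Finset α) :
    ∃ l : List α, l.Nodup ∧ l.toFinset = X ∧ tspCost X = cycleWeight l := by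
  have hfin : {c | ∃ l : List α, l.Nodup ∧ l.toFinset = X ∧ c = cycleWeight l}.Finite := by
    apply Set.Finite.subset ((X.toList.permutations.finite_toSet).image cycleWeight)
    rintro c ⟨l, hnd, hX, rfl⟩
    refine ⟨l, ?_, rfl⟩
    simp only [Set.mem_setOf_eq, List.mem_permutations]
    exact List.perm_of_nodup_nodup_toFinset_eq hnd X.nodup_toList
      (by rw [hX, Finset.toList_toFinset])
  have hne : {c | ∃ l : List α, l.Nodup ∧ l.toFinset = X ∧ c = cycleWeight l}.Nonempty :=
    ⟨cycleWeight X.toList, X.toList, X.nodup_toList, X.toList_toFinset, rfl⟩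
  exact hne.csInf_mem hfin

lemma setDist_le (X Y : Finset α) {x y : α} (hx : x ∈ X) (hy : y ∈ Y) :
    setDist X Y ≤ dist x y := by
  apply csInf_le
  · refine ⟨0, ?_⟩; rintro c ⟨x', _, y', _, rfl⟩; exact dist_nonneg
  · exact ⟨x, hx, y, hy, rfl⟩

lemma setDist_exists (X Y : Finset α) (hX : X.Nonempty) (hY : Y.Nonempty) :
    ∃ x ∈ X, ∃ y ∈ Y, setDist X Y = dist x y := by
  have hfin : {c | ∃ x ∈ X, ∃ y ∈ Y, c = dist x y}.Finite := by
    apply Set.Finite.subset (((X ×ˢ Y : Finset (α × α)).finite_toSet).image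
      (fun p => dist p.1 p.2))
    rintro c ⟨x, hx, y, hy, rfl⟩
    exact ⟨(x, y), by simp [Finset.mem_product, hx, hy], rfl⟩
  have hne : {c | ∃ x ∈ X, ∃ y ∈ Y, c = dist x y}.Nonempty :=
    ⟨dist hX.choose hY.choose, hX.choose, hX.choose_spec, hY.choose, hY.choose_spec, rfl⟩
  exact hne.csInf_mem hfin

lemma filter_le_sum (d : ℝ) (hd : 0 ≤ d) (P : α × α → Bool) :
    ∀ L : List (α × α), (∀ e ∈ L, P e = true → d ≤ dist e.1 e.2) →
      ((L.filter P).length : ℝ) * d ≤ (L.map (fun e => dist e.1 e.2)).sum := by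
  intro L
  induction L with
  | nil => simp
  | cons e t ih =>
    intro h
    have hih := ih (fun e' he' hp => h e' (List.mem_cons_of_mem _ he') hp)
    by_cases he : P e = true
    · have hde := h e List.mem_cons_self he
      simp only [List.filter_cons, he, if_true, List.length_cons, List.map_cons, List.sum_cons]
      push_cast
      linarith
    · have hdn : (0:ℝ) ≤ dist e.1 e.2 := dist_nonneg
      simp only [List.filter_cons, he, if_false, List.map_cons, List.sum_cons]
      simp only [Bool.false_eq_true, if_false]
      linarith

end CrossAux

open CrossAux

/-- `S` consists of `n ≥ 3` pairs `{pts (i, false), pts (i, true)}`. If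
`S = R₀ ∪ B₀` is a feasible coloring with `d(R₀, B₀) > 0` and
`d(R₀, B₀) ≥ μ · (tspCost R₀ + tspCost B₀)` (with `μ > 0`), and `l` is a Hamiltonian
cycle on `S` of total length at most `β · tspCost S` (with `β ≥ 1`), then the number of
edges of `l` crossing the cut `(R₀, B₀)` is at most `(2 + 1/μ) · β`. -/
theorem crossing_edges_bound
    (n : ℕ) (hn : 3 ≤ n)
    (pts : Fin n × Bool → α) (hinj : Function.Injective pts)
    (S : Finset α) (hS : S = Finset.image pts Finset.univ)
    (μ β : ℝ) (hμ : 0 < μ) (hβ : 1 ≤ β)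
    (σ₀ : Fin n → Bool) (R₀ B₀ : Finset α)
    (hR₀ : R₀ = Finset.image (fun i => pts (i, σ₀ i)) Finset.univ)
    (hB₀ : B₀ = Finset.image (fun i => pts (i, !(σ₀ i))) Finset.univ)
    (hdpos : 0 < setDist R₀ B₀)
    (hsep : μ * (tspCost R₀ + tspCost B₀) ≤ setDist R₀ B₀)
    (l : List α) (hnd : l.Nodup) (hl : l.toFinset = S)
    (hlen : cycleWeight l ≤ β * tspCost S) :
    (((l.zip (l.rotate 1)).filter
        (fun e => decide ((e.1 ∈ R₀ ∧ e.2 ∈ B₀) ∨ (e.1 ∈ B₀ ∧ e.2 ∈ R₀)))).length : ℝ)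
      ≤ (2 + 1 / μ) * β := by
  set d : ℝ := setDist R₀ B₀ with hd
  -- basic facts
  have hRne : R₀.Nonempty := by
    rw [hR₀]
    exact ⟨pts (⟨0, by omega⟩, σ₀ ⟨0, by omega⟩), Finset.mem_image_of_mem _ (Finset.mem_univ _)⟩
  have hBne : B₀.Nonempty := by
    rw [hB₀]
    exact ⟨pts (⟨0, by omega⟩, !σ₀ ⟨0, by omega⟩), Finset.mem_image_of_mem _ (Finset.mem_univ _)⟩
  have hdisj : Disjoint R₀ B₀ := by
    rw [hR₀, hB₀, Finset.disjoint_left]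
    rintro a ha hb
    simp only [Finset.mem_image, Finset.mem_univ, true_and] at ha hb
    obtain ⟨i, hi⟩ := ha
    obtain ⟨j, hj⟩ := hb
    rw [← hj] at hi
    have h2 := hinj hi
    have h3 : i = j := (Prod.mk.injEq _ _ _ _ ▸ h2).1
    have h4 : σ₀ i = !σ₀ j := (Prod.mk.injEq _ _ _ _ ▸ h2).2
    rw [h3] at h4
    simp at h4
  have hunion : S = R₀ ∪ B₀ := by
    rw [hS, hR₀, hB₀]
    ext a
    simp only [Finset.mem_image, Finset.mem_union, Finset.mem_univ, true_and]
    constructor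
    · rintro ⟨⟨i, b⟩, rfl⟩
      by_cases hb : b = σ₀ i
      · exact Or.inl ⟨i, by rw [hb]⟩
      · refine Or.inr ⟨i, ?_⟩
        have : b = !σ₀ i := by
          cases b <;> cases h : σ₀ i <;> simp_all
        rw [this]
    · rintro (⟨i, rfl⟩ | ⟨i, rfl⟩)
      · exact ⟨(i, σ₀ i), rfl⟩
      · exact ⟨(i, !σ₀ i), rfl⟩
  -- minimizers
  obtain ⟨x, hxR, y, hyB, hxy⟩ := setDist_exists R₀ B₀ hRne hBne
  obtain ⟨lr, hlrnd, hlrF, hlrw⟩ := tspCost_exists R₀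
  obtain ⟨lb, hlbnd, hlbF, hlbw⟩ := tspCost_exists B₀
  -- rotate lr so that x is at the head
  have hxlr : x ∈ lr := by rw [← List.mem_toFinset, hlrF]; exact hxR
  obtain ⟨pre, post, hpre⟩ := List.append_of_mem hxlr
  have hylb : y ∈ lb := by rw [← List.mem_toFinset, hlbF]; exact hyB
  obtain ⟨preb, postb, hpreb⟩ := List.append_of_mem hylb
  have hrot : lr.rotate pre.length = x :: (post ++ pre) := by
    rw [hpre, List.rotate_eq_drop_append_take (by simp),
      List.drop_left, List.take_left, List.cons_append]
  have hrotb : lb.rotate preb.length = y :: (postb ++ preb) := by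
    rw [hpreb, List.rotate_eq_drop_append_take (by simp),
      List.drop_left, List.take_left, List.cons_append]
  set lr' : List α := x :: (post ++ pre) with hlr'
  set lb' : List α := y :: (postb ++ preb) with hlb'
  have hlr'nd : lr'.Nodup := by rw [← hrot]; exact List.nodup_rotate.mpr hlrnd
  have hlb'nd : lb'.Nodup := by rw [← hrotb]; exact List.nodup_rotate.mpr hlbnd
  have hlr'F : lr'.toFinset = R₀ := by
    rw [← hrot, List.toFinset_eq_of_perm _ _ (List.rotate_perm lr pre.length), hlrF]
  have hlb'F : lb'.toFinset = B₀ := by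
    rw [← hrotb, List.toFinset_eq_of_perm _ _ (List.rotate_perm lb preb.length), hlbF]
  have hlr'w : cycleWeight lr' = tspCost R₀ := by rw [← hrot, cw_rotate, hlrw]
  have hlb'w : cycleWeight lb' = tspCost B₀ := by rw [← hrotb, cw_rotate, hlbw]
  -- the combined tour
  set L : List α := lr' ++ lb' with hL
  have hLnd : L.Nodup := by
    rw [hL, List.nodup_append]
    refine ⟨hlr'nd, hlb'nd, ?_⟩
    intro a ha b hb hab
    subst hab
    have haR : a ∈ R₀ := by rw [← hlr'F]; exact List.mem_toFinset.mpr ha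
    have haB : a ∈ B₀ := by rw [← hlb'F]; exact List.mem_toFinset.mpr hb
    exact Finset.disjoint_left.mp hdisj haR haB
  have hLF : L.toFinset = S := by
    rw [hL, List.toFinset_append, hlr'F, hlb'F, hunion]
  have hTS : tspCost S ≤ tspCost R₀ + tspCost B₀ + 2 * d := by
    have h1 : tspCost S ≤ cycleWeight L := tspCost_le S L hLnd hLF
    have h2 : cycleWeight L ≤ cycleWeight lr' + cycleWeight lb' + 2 * dist x y :=
      cw_combine x y (post ++ pre) (postb ++ preb)
    rw [hlr'w, hlb'w, ← hxy] at h2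
    linarith
  -- lower bound on the cycle weight of l
  have hdle : ∀ e ∈ l.zip (l.rotate 1),
      (decide ((e.1 ∈ R₀ ∧ e.2 ∈ B₀) ∨ (e.1 ∈ B₀ ∧ e.2 ∈ R₀)) = true) →
      d ≤ dist e.1 e.2 := by
    rintro e _ hP
    have hP' := of_decide_eq_true hP
    rcases hP' with ⟨h1, h2⟩ | ⟨h1, h2⟩
    · exact setDist_le R₀ B₀ h1 h2
    · rw [dist_comm]
      exact setDist_le R₀ B₀ h2 h1
  have hlow : (((l.zip (l.rotate 1)).filter
        (fun e => decide ((e.1 ∈ R₀ ∧ e.2 ∈ B₀) ∨ (e.1 ∈ B₀ ∧ e.2 ∈ R₀)))).length : ℝ) * d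
      ≤ cycleWeight l :=
    filter_le_sum d (le_of_lt hdpos) _ _ hdle
  -- arithmetic
  set m : ℝ := (((l.zip (l.rotate 1)).filter
        (fun e => decide ((e.1 ∈ R₀ ∧ e.2 ∈ B₀) ∨ (e.1 ∈ B₀ ∧ e.2 ∈ R₀)))).length : ℝ)
  have hTd : tspCost R₀ + tspCost B₀ ≤ d / μ := by
    rw [le_div_iff₀ hμ]
    linarith [hsep]
  have hβ0 : (0 : ℝ) ≤ β := by linarith
  have hchain : m * d ≤ β * (d / μ + 2 * d) := by
    have h1 : β * tspCost S ≤ β * (tspCost R₀ + tspCost B₀ + 2 * d) :=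
      mul_le_mul_of_nonneg_left hTS hβ0
    have h2 : β * (tspCost R₀ + tspCost B₀ + 2 * d) ≤ β * (d / μ + 2 * d) :=
      mul_le_mul_of_nonneg_left (by linarith) hβ0
    linarith
  have hfin : m * d ≤ ((2 + 1 / μ) * β) * d := by
    have : β * (d / μ + 2 * d) = ((2 + 1 / μ) * β) * d := by
      field_simp
      ring
    linarith [hchain, this ▸ hchain]
  exact le_of_mul_le_mul_right hfin hdpos
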